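/- Let A and B be two categories and let Φ : B → A, Ψ : A → B be a pair of adjoint functors with Ψ right adjoint to Φ, such that the restrictions of Φ and Ψ are mutually inverse equivalences between a full subcategory L ⊆ A and a full subcategory P ⊆ B. Then: (a) a morphism l : L → N in A with L ∈ L is an L-precover if and only if Ψ(l) : Ψ(L) → Ψ(N) is a P-precover; (b) such a morphism l is an L-cover if and only if Ψ(l) is a P-cover; (c) an object N ∈ A has an L-precover if and only if Ψ(N) has a P-precover in B; (d) an object N ∈ A has an L-cover if and only if Ψ(N) has a P-cover in B. -/
import Mathlib


/-!
STATEMENT 4: Let `Φ : B ⥤ A ⊣ Ψ : A ⥤ B` be an adjoint pair whose restrictions are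
mutually inverse equivalences between full subcategories `L ⊆ A` and `P ⊆ B`. Then
precovers/covers with respect to `L` in `A` correspond to precovers/covers with respect
to `P` in `B` under `Ψ`.
-/

open CategoryTheory Limits

universe v₂ u₂ v u

namespace EnochsPaper

variable {A : Type u} [Category.{v} A]

/-- `l : X ⟶ C` is an `L`-precover of `C`. -/
def IsPrecover (L : A → Prop) {X C : A} (l : X ⟶ C) : Prop :=
  L X ∧ ∀ (X' : A), L X' → ∀ l' : X' ⟶ C, ∃ f : X' ⟶ X, f ≫ l = l'

/-- `l : X ⟶ C` is an `L`-cover. -/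
def IsCover (L : A → Prop) {X C : A} (l : X ⟶ C) : Prop :=
  IsPrecover L l ∧ ∀ e : X ⟶ X, e ≫ l = l → IsIso e

/-- The object `C` admits an `L`-precover. -/
def HasPrecover (L : A → Prop) (C : A) : Prop :=
  ∃ (X : A) (l : X ⟶ C), IsPrecover L l

/-- The object `C` admits an `L`-cover. -/
def HasCover (L : A → Prop) (C : A) : Prop :=
  ∃ (X : A) (l : X ⟶ C), IsCover L l

variable {B : Type u₂} [Category.{v₂} B]

/-- Let `Φ ⊣ Ψ` be an adjunction such that `Φ` and `Ψ` restrict to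
mutually inverse equivalences between `L ⊆ A` and `P ⊆ B`; this is expressed by `Φ`
mapping `P` into `L`, `Ψ` mapping `L` into `P`, the unit being an isomorphism on `P`
and the counit being an isomorphism on `L`. Then:
(a) for `l : X ⟶ N` with `X ∈ L`, `l` is an `L`-precover iff `Ψ(l)` is a `P`-precover;
(b) such `l` is an `L`-cover iff `Ψ(l)` is a `P`-cover;
(c) `N` has an `L`-precover iff `Ψ(N)` has a `P`-precover;
(d) `N` has an `L`-cover iff `Ψ(N)` has a `P`-cover. -/
theorem precover_cover_transfer_along_adjunction
    (L : A → Prop) (P : B → Prop) (Φ : B ⥤ A) (Ψ : A ⥤ B) (adj : Φ ⊣ Ψ)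
    (hΦ : ∀ X : B, P X → L (Φ.obj X)) (hΨ : ∀ Y : A, L Y → P (Ψ.obj Y))
    (hunit : ∀ X : B, P X → IsIso (adj.unit.app X))
    (hcounit : ∀ Y : A, L Y → IsIso (adj.counit.app Y)) :
    (∀ (X N : A) (_ : L X) (l : X ⟶ N), IsPrecover L l ↔ IsPrecover P (Ψ.map l)) ∧
    (∀ (X N : A) (_ : L X) (l : X ⟶ N), IsCover L l ↔ IsCover P (Ψ.map l)) ∧
    (∀ N : A, HasPrecover L N ↔ HasPrecover P (Ψ.obj N)) ∧
    (∀ N : A, HasCover L N ↔ HasCover P (Ψ.obj N)) := by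
  have counit_nat : ∀ {X Y : A} (f : X ⟶ Y),
      Φ.map (Ψ.map f) ≫ adj.counit.app Y = adj.counit.app X ≫ f :=
    fun f => adj.counit.naturality f
  have unit_nat : ∀ {X Y : B} (f : X ⟶ Y),
      f ≫ adj.unit.app Y = adj.unit.app X ≫ Ψ.map (Φ.map f) :=
    fun f => adj.unit.naturality f
  -- lifting isomorphisms along the counit / unit
  have isoΨ : ∀ (X : A), L X → ∀ e : X ⟶ X, IsIso (Ψ.map e) → IsIso e := by
    intro X hX e he
    haveI := hcounit X hX
    haveI := he
    have : e = inv (adj.counit.app X) ≫ Φ.map (Ψ.map e) ≫ adj.counit.app X := by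
      rw [counit_nat e, ← Category.assoc, IsIso.inv_hom_id, Category.id_comp]
    rw [this]; infer_instance
  have isoΦ : ∀ (Y : B), P Y → ∀ e : Y ⟶ Y, IsIso (Φ.map e) → IsIso e := by
    intro Y hY e he
    haveI := hunit Y hY
    haveI := he
    have : e = adj.unit.app Y ≫ Ψ.map (Φ.map e) ≫ inv (adj.unit.app Y) := by
      rw [← Category.assoc, ← unit_nat e, Category.assoc, IsIso.hom_inv_id, Category.comp_id]
    rw [this]; infer_instance
  -- (a)
  have pre : ∀ (X N : A) (_ : L X) (l : X ⟶ N),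
      IsPrecover L l ↔ IsPrecover P (Ψ.map l) := by
    intro X N hX l
    constructor
    · rintro ⟨-, h⟩
      refine ⟨hΨ X hX, ?_⟩
      intro X' hX' l'
      obtain ⟨f, hf⟩ := h (Φ.obj X') (hΦ X' hX') ((adj.homEquiv X' N).symm l')
      refine ⟨adj.unit.app X' ≫ Ψ.map f, ?_⟩
      rw [Category.assoc, ← Functor.map_comp, hf, ← Adjunction.homEquiv_unit,
        Equiv.apply_symm_apply]
    · rintro ⟨-, h⟩
      refine ⟨hX, ?_⟩
      intro X' hX' l'
      obtain ⟨f, hf⟩ := h (Ψ.obj X') (hΨ X' hX') (Ψ.map l')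
      haveI := hcounit X' hX'
      refine ⟨inv (adj.counit.app X') ≫ Φ.map f ≫ adj.counit.app X, ?_⟩
      have nat : adj.counit.app X ≫ l = Φ.map (Ψ.map l) ≫ adj.counit.app N :=
        (adj.counit.naturality l).symm
      rw [Category.assoc, Category.assoc, nat, ← Category.assoc (Φ.map f),
        ← Functor.map_comp, hf]
      have nat' : Φ.map (Ψ.map l') ≫ adj.counit.app N = adj.counit.app X' ≫ l' :=
        adj.counit.naturality l'
      rw [nat', ← Category.assoc, IsIso.inv_hom_id, Category.id_comp]
  -- (b)
  have cov : ∀ (X N : A) (_ : L X) (l : X ⟶ N),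
      IsCover L l ↔ IsCover P (Ψ.map l) := by
    intro X N hX l
    constructor
    · rintro ⟨hp, h⟩
      refine ⟨(pre X N hX l).1 hp, ?_⟩
      intro e he
      haveI := hcounit X hX
      set e' : X ⟶ X := inv (adj.counit.app X) ≫ Φ.map e ≫ adj.counit.app X with he'
      have hel : e' ≫ l = l := by
        rw [he', Category.assoc, Category.assoc, ← counit_nat l,
          ← Category.assoc (Φ.map e), ← Functor.map_comp, he,
          counit_nat l, ← Category.assoc, IsIso.inv_hom_id, Category.id_comp]
      haveI : IsIso e' := h e' hel
      have hΦe : Φ.map e = adj.counit.app X ≫ e' ≫ inv (adj.counit.app X) := by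
        rw [he']
        simp
      haveI : IsIso (Φ.map e) := by rw [hΦe]; infer_instance
      exact isoΦ (Ψ.obj X) (hΨ X hX) e this
    · rintro ⟨hp, h⟩
      refine ⟨(pre X N hX l).2 hp, ?_⟩
      intro e he
      have : Ψ.map e ≫ Ψ.map l = Ψ.map l := by rw [← Functor.map_comp, he]
      exact isoΨ X hX e (h (Ψ.map e) this)
  refine ⟨pre, cov, ?_, ?_⟩
  -- (c)
  · intro N
    constructor
    · rintro ⟨X, l, hl⟩
      exact ⟨Ψ.obj X, Ψ.map l, (pre X N hl.1 l).1 hl⟩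
    · rintro ⟨Y, p, hY, h⟩
      refine ⟨Φ.obj Y, Φ.map p ≫ adj.counit.app N, hΦ Y hY, ?_⟩
      intro X' hX' l'
      obtain ⟨f, hf⟩ := h (Ψ.obj X') (hΨ X' hX') (Ψ.map l')
      haveI := hcounit X' hX'
      refine ⟨inv (adj.counit.app X') ≫ Φ.map f, ?_⟩
      rw [Category.assoc, ← Category.assoc (Φ.map f), ← Functor.map_comp, hf,
        show Φ.map (Ψ.map l') ≫ adj.counit.app N = adj.counit.app X' ≫ l' from
          adj.counit.naturality l',
        ← Category.assoc, IsIso.inv_hom_id, Category.id_comp]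
  -- (d)
  · intro N
    constructor
    · rintro ⟨X, l, hl⟩
      exact ⟨Ψ.obj X, Ψ.map l, (cov X N hl.1.1 l).1 hl⟩
    · rintro ⟨Y, p, ⟨hY, hfac⟩, hcov⟩
      haveI := hunit Y hY
      set l : Φ.obj Y ⟶ N := Φ.map p ≫ adj.counit.app N with hldef
      have hLl : L (Φ.obj Y) := hΦ Y hY
      have key : adj.unit.app Y ≫ Ψ.map l = p := by
        rw [hldef, Functor.map_comp, ← Category.assoc, ← unit_nat p,
          Category.assoc, adj.right_triangle_components, Category.comp_id]
      refine ⟨Φ.obj Y, l, ⟨hLl, ?_⟩, ?_⟩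
      · -- precover part
        intro X' hX' l'
        obtain ⟨f, hf⟩ := hfac (Ψ.obj X') (hΨ X' hX') (Ψ.map l')
        haveI := hcounit X' hX'
        refine ⟨inv (adj.counit.app X') ≫ Φ.map f, ?_⟩
        rw [hldef, Category.assoc, ← Category.assoc (Φ.map f), ← Functor.map_comp, hf,
          show Φ.map (Ψ.map l') ≫ adj.counit.app N = adj.counit.app X' ≫ l' from
            adj.counit.naturality l',
          ← Category.assoc, IsIso.inv_hom_id, Category.id_comp]
      · -- cover part
        intro e he
        have hΨe : Ψ.map e ≫ Ψ.map l = Ψ.map l := by rw [← Functor.map_comp, he]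
        have hΨl : inv (adj.unit.app Y) ≫ p = Ψ.map l := by
          rw [← key, ← Category.assoc, IsIso.inv_hom_id, Category.id_comp]
        set e'' : Y ⟶ Y := adj.unit.app Y ≫ Ψ.map e ≫ inv (adj.unit.app Y) with he''
        have : e'' ≫ p = p := by
          rw [he'', Category.assoc, Category.assoc, hΨl, hΨe, key]
        haveI : IsIso e'' := hcov e'' this
        have hΨeiso : Ψ.map e = inv (adj.unit.app Y) ≫ e'' ≫ adj.unit.app Y := by
          rw [he'']; simp
        haveI : IsIso (Ψ.map e) := by rw [hΨeiso]; infer_instance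
        exact isoΨ (Φ.obj Y) hLl e this

end EnochsPaper
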